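/- (Weight inhomogeneity inequality, used in the proof of Lemma 5.2.) Let D be a nonempty finite set and θ : D → ℝ with 0 < a ≤ θ_i ≤ b for all i ∈ D. Then (Σ_{i∈D} θ_i²)/(Σ_{i∈D} θ_i)² ≤ (a + b)²/(4·|D|·a·b). -/
import Mathlib

open Finset

/-- **Weight inhomogeneity inequality** (used in the proof of Lemma 5.2). For weights
`0 < a ≤ θ_i ≤ b` on a nonempty finite set `D`,
`(Σ θ_i²)/(Σ θ_i)² ≤ (a+b)²/(4|D|ab)`. -/
theorem weight_inhomogeneity {D : Type*} [Fintype D] [Nonempty D]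
    (θ : D → ℝ) (a b : ℝ) (ha : 0 < a)
    (hθa : ∀ i, a ≤ θ i) (hθb : ∀ i, θ i ≤ b) :
    (∑ i, (θ i)^2) / (∑ i, θ i)^2 ≤ (a + b)^2 / (4 * (Fintype.card D : ℝ) * a * b) := by
  set n : ℝ := (Fintype.card D : ℝ) with hn
  have hb : 0 < b := lt_of_lt_of_le ha ((hθa (Classical.arbitrary D)).trans (hθb _))
  have hnpos : 0 < n := by
    have := Fintype.card_pos (α := D)
    positivity
  set S : ℝ := ∑ i, θ i with hSdef
  have hS : n * a ≤ S := by
    rw [hSdef, hn]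
    calc (Fintype.card D : ℝ) * a = ∑ _i : D, a := by
          simp [mul_comm]
      _ ≤ ∑ i, θ i := Finset.sum_le_sum fun i _ => hθa i
  have hSpos : 0 < S := lt_of_lt_of_le (by positivity) hS
  have h1 : (∑ i, (θ i)^2) ≤ (a + b) * S - n * a * b := by
    have : (∑ i, (θ i)^2) ≤ ∑ i, ((a + b) * θ i - a * b) :=
      Finset.sum_le_sum fun i _ => by nlinarith [hθa i, hθb i]
    calc (∑ i, (θ i)^2) ≤ ∑ i, ((a + b) * θ i - a * b) := this
      _ = (a + b) * S - n * a * b := by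
          rw [Finset.sum_sub_distrib, ← Finset.mul_sum]
          simp [hSdef, hn]; ring
  rw [div_le_div_iff₀ (by positivity) (by positivity)]
  nlinarith [sq_nonneg ((a + b) * S - 2 * n * a * b), mul_pos (mul_pos hnpos ha) hb, sq_nonneg S]
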